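/- For every integer s ≥ 2, there exists a linear code over GF(4) of length 5s+5, dimension 4s+2, and minimum distance 4 that has locality 4. Since (5s+5) − (4s+2) − ⌈(4s+2)/4⌉ + 2 = 4, such a code is an optimal (5s+5, 4s+2, 4) LRC meeting the Singleton-like bound. -/

import Mathlib

noncomputable def wt {F : Type*} [Zero F] {ι : Type*} (x : ι → F) : ℕ :=
  {i | x i ≠ 0}.ncard

def dualCode {F : Type*} [Field F] {n : ℕ} (C : Submodule F (Fin n → F)) :
    Submodule F (Fin n → F) where
  carrier := {y | ∀ x ∈ C, ∑ i, x i * y i = 0}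
  add_mem' := by
    intro a b ha hb
    simp only [Set.mem_setOf_eq] at *
    intro z hz
    simp [Pi.add_apply, mul_add, Finset.sum_add_distrib, ha z hz, hb z hz]
  zero_mem' := by
    intro z hz
    simp
  smul_mem' := by
    intro c a ha
    simp only [Set.mem_setOf_eq] at *
    intro z hz
    have h : ∀ i, z i * (c • a) i = c * (z i * a i) := by
      intro i; simp [smul_eq_mul]; ring
    simp only [h, ← Finset.mul_sum, ha z hz, mul_zero]

def isMinDist {F : Type*} [Field F] {ι : Type*} (C : Submodule F (ι → F)) (d : ℕ) : Prop :=
  (∃ x ∈ C, x ≠ 0 ∧ wt x = d) ∧ ∀ x ∈ C, x ≠ 0 → d ≤ wt x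

def hasLocality {F : Type*} [Field F] {n : ℕ} (C : Submodule F (Fin n → F)) (r : ℕ) : Prop :=
  ∀ i : Fin n, ∃ h ∈ dualCode C, h i ≠ 0 ∧ wt h ≤ r + 1

abbrev GF4 := GaloisField 2 2

def ceilDiv (a b : ℕ) : ℕ := (a + b - 1) / b

namespace S17

noncomputable instance : Fintype GF4 := Fintype.ofFinite _

lemma gf4_char2 : (2 : GF4) = 0 := by
  have := CharP.cast_eq_zero GF4 2
  simpa using this

lemma gf4_card : Fintype.card GF4 = 4 := by
  have := GaloisField.card 2 2 (by norm_num)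
  rw [Nat.card_eq_fintype_card] at this
  simpa using this

lemma exists_omega : ∃ ω : GF4, ω ≠ 0 ∧ ω ≠ 1 ∧ ω ^ 2 + ω + 1 = 0 := by
  classical
  have hcard : Fintype.card GF4 = 4 := gf4_card
  have : ∃ ω : GF4, ω ∉ ({0, 1} : Finset GF4) := by
    by_contra hcon
    push_neg at hcon
    have h1 : (Finset.univ : Finset GF4) ⊆ {0, 1} := fun x _ => hcon x
    have h2 := Finset.card_le_card h1
    have h3 : ({0, 1} : Finset GF4).card ≤ 2 := Finset.card_insert_le _ _ |>.trans (by simp)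
    rw [Finset.card_univ, hcard] at h2
    omega
  obtain ⟨ω, hω⟩ := this
  simp only [Finset.mem_insert, Finset.mem_singleton, not_or] at hω
  obtain ⟨h0, h1⟩ := hω
  refine ⟨ω, h0, h1, ?_⟩
  have hp : ω ^ Fintype.card GF4 = ω := FiniteField.pow_card ω
  rw [hcard] at hp
  have hfact : ω * ((ω - 1) * (ω ^ 2 + ω + 1)) = 0 := by linear_combination hp
  rcases mul_eq_zero.mp hfact with h | h
  · exact absurd h h0
  rcases mul_eq_zero.mp h with h | h
  · exact absurd (by linear_combination h) h1
  · exact h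

def e (s : ℕ) (j : Fin (s+1)) (q : Fin 5) : Fin (5*s+5) := ⟨5*j.val+q.val, by omega⟩

lemma e_val (s : ℕ) (j : Fin (s+1)) (q : Fin 5) : (e s j q).val = 5*j.val+q.val := rfl

lemma e_inj (s : ℕ) (j : Fin (s+1)) : Function.Injective (e s j) := by
  intro q1 q2 h
  have := congrArg Fin.val h
  simp only [e_val] at this
  exact Fin.ext (by omega)

noncomputable def av (ω : GF4) : Fin 5 → GF4 := ![0, 1, 0, 1, ω]
noncomputable def bv (ω : GF4) : Fin 5 → GF4 := ![0, 0, 1, ω, 1]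

def pos {s : ℕ} (i : Fin (5*s+5)) : Fin 5 := ⟨i.val % 5, by omega⟩

noncomputable def Lf {n : ℕ} (c : Fin n → GF4) : (Fin n → GF4) →ₗ[GF4] GF4 where
  toFun x := ∑ i, c i * x i
  map_add' x y := by simp [mul_add, Finset.sum_add_distrib]
  map_smul' r x := by simp [Finset.mul_sum, mul_left_comm r]

lemma Lf_apply {n : ℕ} (c x : Fin n → GF4) : Lf c x = ∑ i, c i * x i := rfl

noncomputable def phi (s : ℕ) (ω : GF4) :
    (Fin (5*s+5) → GF4) →ₗ[GF4] ((Fin (s+1) → GF4) × (GF4 × GF4)) :=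
  LinearMap.prod
    (LinearMap.pi (fun j => Lf (fun i => if i.val / 5 = j.val then 1 else 0)))
    (LinearMap.prod (Lf (fun i => av ω (pos i))) (Lf (fun i => bv ω (pos i))))

lemma mem_ker_iff (s : ℕ) (ω : GF4) (x : Fin (5*s+5) → GF4) :
    x ∈ LinearMap.ker (phi s ω) ↔
      (∀ j : Fin (s+1), ∑ i, (if i.val / 5 = j.val then (1:GF4) else 0) * x i = 0) ∧
      (∑ i, av ω (pos i) * x i = 0) ∧ (∑ i, bv ω (pos i) * x i = 0) := by
  simp [phi, LinearMap.mem_ker, LinearMap.prod, LinearMap.pi, Lf, Prod.ext_iff, funext_iff]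

def E (s : ℕ) : (Fin (s+1) × Fin 5) ≃ Fin (5*s+5) where
  toFun jq := e s jq.1 jq.2
  invFun i := (⟨i.val / 5, by omega⟩, ⟨i.val % 5, by omega⟩)
  left_inv := by
    rintro ⟨j, q⟩
    have hj := j.isLt; have hq := q.isLt
    ext <;> simp [e_val] <;> omega
  right_inv := by
    intro i
    exact Fin.ext (by simp [e_val]; omega)

lemma sum_blocks (s : ℕ) (f : Fin (5*s+5) → GF4) :
    ∑ i, f i = ∑ j : Fin (s+1), ∑ q : Fin 5, f (e s j q) := by
  calc ∑ i, f i = ∑ jq : Fin (s+1) × Fin 5, f (E s jq) :=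
        (Fintype.sum_equiv (E s) _ f (fun jq => rfl)).symm
    _ = ∑ j : Fin (s+1), ∑ q : Fin 5, f (e s j q) := Fintype.sum_prod_type _

lemma e_div (s : ℕ) (j : Fin (s+1)) (q : Fin 5) : (e s j q).val / 5 = j.val := by
  have := q.isLt; simp only [e_val]; omega

lemma pos_e (s : ℕ) (j : Fin (s+1)) (q : Fin 5) : pos (e s j q) = q := by
  have := q.isLt
  exact Fin.ext (by simp only [pos, e_val]; omega)

lemma local_sum (s : ℕ) (x : Fin (5*s+5) → GF4) (j : Fin (s+1)) :
    ∑ i, (if i.val / 5 = j.val then (1:GF4) else 0) * x i = ∑ q, x (e s j q) := by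
  rw [sum_blocks s (fun i => (if i.val / 5 = j.val then (1:GF4) else 0) * x i)]
  rw [Finset.sum_eq_single j]
  · exact Finset.sum_congr rfl fun q _ => by rw [e_div, if_pos rfl, one_mul]
  · intro j' _ hj'
    exact Finset.sum_eq_zero fun q _ => by
      rw [e_div, if_neg (fun h => hj' (Fin.ext h)), zero_mul]
  · intro h; exact absurd (Finset.mem_univ j) h

lemma coeff_sum (s : ℕ) (g : Fin 5 → GF4) (x : Fin (5*s+5) → GF4) :
    ∑ i, g (pos i) * x i = ∑ j : Fin (s+1), ∑ q : Fin 5, g q * x (e s j q) := by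
  rw [sum_blocks s (fun i => g (pos i) * x i)]
  exact Finset.sum_congr rfl fun j _ => Finset.sum_congr rfl fun q _ => by rw [pos_e]

lemma pair_disj (c : Fin 5 → GF4) (z1 z2 : Fin 5) (hne : z1 ≠ z2)
    (h1 : c z1 = 0) (h2 : c z2 = 0) :
    (c 0 = 0 ∧ c 1 = 0) ∨ (c 0 = 0 ∧ c 2 = 0) ∨ (c 0 = 0 ∧ c 3 = 0) ∨ (c 0 = 0 ∧ c 4 = 0) ∨
    (c 1 = 0 ∧ c 2 = 0) ∨ (c 1 = 0 ∧ c 3 = 0) ∨ (c 1 = 0 ∧ c 4 = 0) ∨ (c 2 = 0 ∧ c 3 = 0) ∨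
    (c 2 = 0 ∧ c 4 = 0) ∨ (c 3 = 0 ∧ c 4 = 0) := by
  fin_cases z1 <;> fin_cases z2 <;> simp_all

lemma all_zero (c : Fin 5 → GF4)
    (h : c 0 = 0 ∧ c 1 = 0 ∧ c 2 = 0 ∧ c 3 = 0 ∧ c 4 = 0) : ∀ q, c q = 0 := by
  intro q
  fin_cases q
  exacts [h.1, h.2.1, h.2.2.1, h.2.2.2.1, h.2.2.2.2]

end S17

lemma key (ω : GF4) (hom : ω ^ 2 + ω + 1 = 0) (h2 : (2 : GF4) = 0)
    (c0 c1 c2 c3 c4 : GF4)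
    (e1 : c0 + c1 + c2 + c3 + c4 = 0)
    (e2 : c1 + c3 + ω * c4 = 0)
    (e3 : c2 + ω * c3 + c4 = 0)
    (hz : (c0 = 0 ∧ c1 = 0) ∨ (c0 = 0 ∧ c2 = 0) ∨ (c0 = 0 ∧ c3 = 0) ∨ (c0 = 0 ∧ c4 = 0) ∨ (c1 = 0 ∧ c2 = 0) ∨ (c1 = 0 ∧ c3 = 0) ∨ (c1 = 0 ∧ c4 = 0) ∨ (c2 = 0 ∧ c3 = 0) ∨ (c2 = 0 ∧ c4 = 0) ∨ (c3 = 0 ∧ c4 = 0)) :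
    c0 = 0 ∧ c1 = 0 ∧ c2 = 0 ∧ c3 = 0 ∧ c4 = 0 := by
  rcases hz with h|h|h|h|h|h|h|h|h|h
  · refine ⟨?_, ?_, ?_, ?_, ?_⟩
    · linear_combination h.1
    · linear_combination h.2
    · linear_combination ω * e1 + (ω + 1) * e2 + (ω + 1) * e3 + ω * h.1 + h.2 + ((-1) * c3 + (-1) * c4) * hom + ((-ω) * c0 + (-ω - 1) * c1 + (-ω) * c2 + (-ω) * c3 + (-ω) * c4) * h2
    · linear_combination ω * e1 + ω * e3 + ω * h.1 + ω * h.2 + ((-1) * c3) * hom + ((-ω) * c0 + (-ω) * c1 + (-ω) * c2 + (1) * c3 + (-ω) * c4) * h2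
    · linear_combination e1 + (ω + 1) * e2 + e3 + h.1 + ω * h.2 + ((-1) * c4) * hom + ((-1) * c0 + (-ω - 1) * c1 + (-1) * c2 + (-ω - 1) * c3) * h2
  · refine ⟨?_, ?_, ?_, ?_, ?_⟩
    · linear_combination h.1
    · linear_combination ω * e1 + (ω + 1) * e2 + (ω + 1) * e3 + ω * h.1 + h.2 + ((-1) * c3 + (-1) * c4) * hom + ((-ω) * c0 + (-ω) * c1 + (-ω - 1) * c2 + (-ω) * c3 + (-ω) * c4) * h2
    · linear_combination h.2
    · linear_combination e1 + e2 + (ω + 1) * e3 + h.1 + ω * h.2 + ((-1) * c3) * hom + ((-1) * c0 + (-1) * c1 + (-ω - 1) * c2 + (-ω - 1) * c4) * h2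
    · linear_combination ω * e1 + ω * e2 + ω * h.1 + ω * h.2 + ((-1) * c4) * hom + ((-ω) * c0 + (-ω) * c1 + (-ω) * c2 + (-ω) * c3 + (1) * c4) * h2
  · refine ⟨?_, ?_, ?_, ?_, ?_⟩
    · linear_combination h.1
    · linear_combination e1 + e3 + h.1 + (ω + 1) * h.2 + ((-1) * c0 + (-1) * c2 + (-ω - 1) * c3 + (-1) * c4) * h2
    · linear_combination (ω + 1) * e1 + (ω + 1) * e2 + ω * e3 + (ω + 1) * h.1 + (ω + 1) * h.2 + ((-1) * c3 + (-1) * c4) * hom + ((-ω - 1) * c0 + (-ω - 1) * c1 + (-ω) * c2 + (-ω - 1) * c3 + (-ω) * c4) * h2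
    · linear_combination h.2
    · linear_combination (ω + 1) * e1 + (ω + 1) * e2 + (ω + 1) * e3 + (ω + 1) * h.1 + h.2 + ((-1) * c3 + (-1) * c4) * hom + ((-ω - 1) * c0 + (-ω - 1) * c1 + (-ω - 1) * c2 + (-ω - 1) * c3 + (-ω) * c4) * h2
  · refine ⟨?_, ?_, ?_, ?_, ?_⟩
    · linear_combination h.1
    · linear_combination (ω + 1) * e1 + ω * e2 + (ω + 1) * e3 + (ω + 1) * h.1 + (ω + 1) * h.2 + ((-1) * c3 + (-1) * c4) * hom + ((-ω - 1) * c0 + (-ω) * c1 + (-ω - 1) * c2 + (-ω) * c3 + (-ω - 1) * c4) * h2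
    · linear_combination e1 + e2 + h.1 + (ω + 1) * h.2 + ((-1) * c0 + (-1) * c1 + (-1) * c3 + (-ω - 1) * c4) * h2
    · linear_combination (ω + 1) * e1 + (ω + 1) * e2 + (ω + 1) * e3 + (ω + 1) * h.1 + h.2 + ((-1) * c3 + (-1) * c4) * hom + ((-ω - 1) * c0 + (-ω - 1) * c1 + (-ω - 1) * c2 + (-ω) * c3 + (-ω - 1) * c4) * h2
    · linear_combination h.2
  · refine ⟨?_, ?_, ?_, ?_, ?_⟩
    · linear_combination e1 + ω * e2 + ω * e3 + (ω + 1) * h.1 + (ω + 1) * h.2 + ((-1) * c3 + (-1) * c4) * hom + ((-ω - 1) * c1 + (-ω - 1) * c2) * h2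
    · linear_combination h.1
    · linear_combination h.2
    · linear_combination (ω + 1) * e2 + e3 + (ω + 1) * h.1 + h.2 + ((-1) * c4) * hom + ((-ω - 1) * c1 + (-1) * c2 + (-ω) * c3) * h2
    · linear_combination e2 + (ω + 1) * e3 + h.1 + (ω + 1) * h.2 + ((-1) * c3) * hom + ((-1) * c1 + (-ω - 1) * c2 + (-ω) * c4) * h2
  · refine ⟨?_, ?_, ?_, ?_, ?_⟩
    · linear_combination e1 + e3 + h.1 + (ω + 1) * h.2 + ((-1) * c1 + (-1) * c2 + (-ω - 1) * c3 + (-1) * c4) * h2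
    · linear_combination h.1
    · linear_combination (ω + 1) * e2 + e3 + (ω + 1) * h.1 + h.2 + ((-1) * c4) * hom + ((-ω - 1) * c1 + (-ω - 1) * c3) * h2
    · linear_combination h.2
    · linear_combination (ω + 1) * e2 + (ω + 1) * h.1 + (ω + 1) * h.2 + ((-1) * c4) * hom + ((-ω - 1) * c1 + (-ω - 1) * c3 + (1) * c4) * h2
  · refine ⟨?_, ?_, ?_, ?_, ?_⟩
    · linear_combination e1 + (ω + 1) * e2 + e3 + ω * h.1 + h.2 + ((-1) * c4) * hom + ((-ω - 1) * c1 + (-1) * c2 + (-ω - 1) * c3 + (-1) * c4) * h2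
    · linear_combination h.1
    · linear_combination ω * e2 + e3 + ω * h.1 + ω * h.2 + ((-1) * c4) * hom + ((-ω) * c1 + (-ω) * c3) * h2
    · linear_combination e2 + h.1 + ω * h.2 + ((-1) * c1 + (-ω) * c4) * h2
    · linear_combination h.2
  · refine ⟨?_, ?_, ?_, ?_, ?_⟩
    · linear_combination e1 + e2 + (ω + 1) * e3 + ω * h.1 + h.2 + ((-1) * c3) * hom + ((-1) * c1 + (-ω - 1) * c2 + (-1) * c3 + (-ω - 1) * c4) * h2
    · linear_combination e2 + ω * e3 + ω * h.1 + ω * h.2 + ((-1) * c3) * hom + ((-ω) * c2 + (-ω) * c4) * h2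
    · linear_combination h.1
    · linear_combination h.2
    · linear_combination e3 + h.1 + ω * h.2 + ((-1) * c2 + (-ω) * c3) * h2
  · refine ⟨?_, ?_, ?_, ?_, ?_⟩
    · linear_combination e1 + e2 + h.1 + (ω + 1) * h.2 + ((-1) * c1 + (-1) * c2 + (-1) * c3 + (-ω - 1) * c4) * h2
    · linear_combination e2 + (ω + 1) * e3 + (ω + 1) * h.1 + h.2 + ((-1) * c3) * hom + ((-ω - 1) * c2 + (-ω - 1) * c4) * h2
    · linear_combination h.1
    · linear_combination (ω + 1) * e3 + (ω + 1) * h.1 + (ω + 1) * h.2 + ((-1) * c3) * hom + ((-ω - 1) * c2 + (1) * c3 + (-ω - 1) * c4) * h2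
    · linear_combination h.2
  · refine ⟨?_, ?_, ?_, ?_, ?_⟩
    · linear_combination e1 + e2 + e3 + ω * h.1 + ω * h.2 + ((-1) * c1 + (-1) * c2 + (-ω - 1) * c3 + (-ω - 1) * c4) * h2
    · linear_combination e2 + h.1 + ω * h.2 + ((-1) * c3 + (-ω) * c4) * h2
    · linear_combination e3 + ω * h.1 + h.2 + ((-ω) * c3 + (-1) * c4) * h2
    · linear_combination h.1
    · linear_combination h.2

/-- for s ≥ 2 there exists an optimal quaternary
(5s+5, 4s+2, 4) LRC with minimum distance 4. -/
theorem stmt_17 (s : ℕ) (hs : 2 ≤ s) :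
    ∃ C : Submodule GF4 (Fin (5 * s + 5) → GF4),
      Module.finrank GF4 C = 4 * s + 2 ∧ isMinDist C 4 ∧ hasLocality C 4 := by
  classical
  obtain ⟨ω, hω0, hω1, hom⟩ := S17.exists_omega
  have h2 : (2 : GF4) = 0 := S17.gf4_char2
  refine ⟨LinearMap.ker (S17.phi s ω), ?_, ?_, ?_⟩
  · -- finrank
    have hsurj : Function.Surjective (S17.phi s ω) := by
      rintro ⟨y, u, v⟩
      let X : ℕ → GF4 := fun m =>
        if m = 0 then y 0 + u + v else if m = 1 then u else if m = 2 then v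
        else if m % 5 = 0 then y ⟨min (m / 5) s, by omega⟩ else 0
      refine ⟨fun i => X i.val, ?_⟩
      have hXval : ∀ (j : Fin (s+1)) (q : Fin 5),
          (fun i : Fin (5*s+5) => X i.val) (S17.e s j q) = X (5*j.val + q.val) := by
        intro j q; rfl
      have hX3 : ∀ j : ℕ, X (5*j + 3) = 0 := by
        intro j
        simp only [X]
        rw [if_neg (by omega), if_neg (by omega), if_neg (by omega), if_neg (by omega)]
      have hX4 : ∀ j : ℕ, X (5*j + 4) = 0 := by
        intro j
        simp only [X]
        rw [if_neg (by omega), if_neg (by omega), if_neg (by omega), if_neg (by omega)]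
      have hX1 : ∀ j : Fin (s+1), j.val ≠ 0 → X (5*j.val + 1) = 0 := by
        intro j hj
        simp only [X]
        rw [if_neg (by omega), if_neg (by omega), if_neg (by omega), if_neg (by omega)]
      have hX2 : ∀ j : Fin (s+1), j.val ≠ 0 → X (5*j.val + 2) = 0 := by
        intro j hj
        simp only [X]
        rw [if_neg (by omega), if_neg (by omega), if_neg (by omega), if_neg (by omega)]
      have hX0 : ∀ j : Fin (s+1), j.val ≠ 0 → X (5*j.val + 0) = y j := by
        intro j hj
        have hjs := j.isLt
        simp only [X]
        rw [if_neg (by omega), if_neg (by omega), if_neg (by omega), if_pos (by omega)]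
        congr 1
        exact Fin.ext (by simp; omega)
      have hloc : ∀ j : Fin (s+1), ∑ q, (fun i : Fin (5*s+5) => X i.val) (S17.e s j q) = y j := by
        intro j
        rw [Fin.sum_univ_five]
        simp only [hXval]
        rw [show ((0:Fin 5):ℕ) = 0 from rfl, show ((1:Fin 5):ℕ) = 1 from rfl,
            show ((2:Fin 5):ℕ) = 2 from rfl, show ((3:Fin 5):ℕ) = 3 from rfl,
            show ((4:Fin 5):ℕ) = 4 from rfl]
        by_cases hj : j.val = 0
        · have hj' : j = 0 := Fin.ext (by simpa using hj)
          subst hj'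
          have h0 : (Fin.val (0 : Fin (s+1))) = 0 := rfl
          rw [h0]
          norm_num [X]
          linear_combination (u + v) * h2
        · rw [hX0 j hj, hX1 j hj, hX2 j hj]
          rw [hX3 j.val, hX4 j.val]
          ring
      have hinnerA : ∀ j : Fin (s+1),
          ∑ q, S17.av ω q * (fun i : Fin (5*s+5) => X i.val) (S17.e s j q)
            = (if j = 0 then u else 0) := by
        intro j
        rw [Fin.sum_univ_five]
        simp only [hXval]
        rw [show ((0:Fin 5):ℕ) = 0 from rfl, show ((1:Fin 5):ℕ) = 1 from rfl,
            show ((2:Fin 5):ℕ) = 2 from rfl, show ((3:Fin 5):ℕ) = 3 from rfl,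
            show ((4:Fin 5):ℕ) = 4 from rfl]
        have hv0 : S17.av ω 0 = 0 := rfl
        have hv1 : S17.av ω 1 = 1 := rfl
        have hv2 : S17.av ω 2 = 0 := rfl
        have hv3 : S17.av ω 3 = 1 := rfl
        have hv4 : S17.av ω 4 = ω := rfl
        rw [hv0, hv1, hv2, hv3, hv4]
        rw [hX3, hX4]
        by_cases hj : j = 0
        · subst hj
          rw [if_pos rfl]
          rw [show X (5*((0:Fin (s+1)):ℕ) + 1) = u from rfl]; ring
        · rw [if_neg hj, hX1 j (fun h => hj (Fin.ext (by simpa using h)))]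
          ring
      have hinnerB : ∀ j : Fin (s+1),
          ∑ q, S17.bv ω q * (fun i : Fin (5*s+5) => X i.val) (S17.e s j q)
            = (if j = 0 then v else 0) := by
        intro j
        rw [Fin.sum_univ_five]
        simp only [hXval]
        rw [show ((0:Fin 5):ℕ) = 0 from rfl, show ((1:Fin 5):ℕ) = 1 from rfl,
            show ((2:Fin 5):ℕ) = 2 from rfl, show ((3:Fin 5):ℕ) = 3 from rfl,
            show ((4:Fin 5):ℕ) = 4 from rfl]
        have hv0 : S17.bv ω 0 = 0 := rfl
        have hv1 : S17.bv ω 1 = 0 := rfl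
        have hv2 : S17.bv ω 2 = 1 := rfl
        have hv3 : S17.bv ω 3 = ω := rfl
        have hv4 : S17.bv ω 4 = 1 := rfl
        rw [hv0, hv1, hv2, hv3, hv4]
        rw [hX3, hX4]
        by_cases hj : j = 0
        · subst hj
          rw [if_pos rfl]
          rw [show X (5*((0:Fin (s+1)):ℕ) + 2) = v from rfl]; ring
        · rw [if_neg hj, hX2 j (fun h => hj (Fin.ext (by simpa using h)))]
          ring
      have : S17.phi s ω (fun i => X i.val) = (y, u, v) := by
        simp only [S17.phi, LinearMap.prod_apply, Function.prod, LinearMap.pi_apply, S17.Lf_apply]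
        refine Prod.ext ?_ (Prod.ext ?_ ?_)
        · funext j
          dsimp only
          rw [LinearMap.pi_apply, S17.Lf_apply, S17.local_sum]
          exact hloc j
        · dsimp only
          rw [S17.coeff_sum]
          rw [Finset.sum_congr rfl (fun j _ => hinnerA j)]
          simp
        · dsimp only
          rw [S17.coeff_sum]
          rw [Finset.sum_congr rfl (fun j _ => hinnerB j)]
          simp
      exact this
    have h1 := LinearMap.finrank_range_add_finrank_ker (S17.phi s ω)
    rw [LinearMap.range_eq_top.mpr hsurj, finrank_top] at h1
    rw [Module.finrank_pi, Module.finrank_prod, Module.finrank_prod, Module.finrank_pi,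
      Module.finrank_self] at h1
    simp only [Fintype.card_fin] at h1
    omega
  · -- min distance
    constructor
    · -- weight-4 codeword
      let W : ℕ → GF4 := fun m =>
        if m = 0 then ω else if m = 1 then 1 else if m = 2 then ω else if m = 3 then 1 else 0
      have hWe : ∀ (j : Fin (s+1)) (q : Fin 5),
          (fun i : Fin (5*s+5) => W i.val) (S17.e s j q) = W (5*j.val+q.val) := fun _ _ => rfl
      have hWt : ∀ j : Fin (s+1), j.val ≠ 0 → ∀ k, k < 5 → W (5*j.val+k) = 0 := by
        intro j hj k hk
        simp only [W]
        rw [if_neg (by omega), if_neg (by omega), if_neg (by omega), if_neg (by omega)]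
      refine ⟨fun i => W i.val, ?_, ?_, ?_⟩
      · rw [S17.mem_ker_iff]
        refine ⟨?_, ?_, ?_⟩
        · intro j
          rw [S17.local_sum, Fin.sum_univ_five]
          simp only [hWe]
          rw [show ((0:Fin 5):ℕ) = 0 from rfl, show ((1:Fin 5):ℕ) = 1 from rfl,
              show ((2:Fin 5):ℕ) = 2 from rfl, show ((3:Fin 5):ℕ) = 3 from rfl,
              show ((4:Fin 5):ℕ) = 4 from rfl]
          by_cases hj : j.val = 0
          · rw [hj]
            norm_num [W]
            linear_combination (ω + 1) * h2
          · rw [hWt j hj 0 (by norm_num), hWt j hj 1 (by norm_num), hWt j hj 2 (by norm_num),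
                hWt j hj 3 (by norm_num), hWt j hj 4 (by norm_num)]
            ring
        · rw [S17.coeff_sum]
          apply Finset.sum_eq_zero
          intro j _
          rw [Fin.sum_univ_five]
          simp only [hWe]
          rw [show ((0:Fin 5):ℕ) = 0 from rfl, show ((1:Fin 5):ℕ) = 1 from rfl,
              show ((2:Fin 5):ℕ) = 2 from rfl, show ((3:Fin 5):ℕ) = 3 from rfl,
              show ((4:Fin 5):ℕ) = 4 from rfl]
          rw [show S17.av ω 0 = 0 from rfl, show S17.av ω 1 = 1 from rfl,
              show S17.av ω 2 = 0 from rfl, show S17.av ω 3 = 1 from rfl,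
              show S17.av ω 4 = ω from rfl]
          by_cases hj : j.val = 0
          · rw [hj]
            norm_num [W]
            linear_combination h2
          · rw [hWt j hj 0 (by norm_num), hWt j hj 1 (by norm_num), hWt j hj 2 (by norm_num),
                hWt j hj 3 (by norm_num), hWt j hj 4 (by norm_num)]
            ring
        · rw [S17.coeff_sum]
          apply Finset.sum_eq_zero
          intro j _
          rw [Fin.sum_univ_five]
          simp only [hWe]
          rw [show ((0:Fin 5):ℕ) = 0 from rfl, show ((1:Fin 5):ℕ) = 1 from rfl,
              show ((2:Fin 5):ℕ) = 2 from rfl, show ((3:Fin 5):ℕ) = 3 from rfl,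
              show ((4:Fin 5):ℕ) = 4 from rfl]
          rw [show S17.bv ω 0 = 0 from rfl, show S17.bv ω 1 = 0 from rfl,
              show S17.bv ω 2 = 1 from rfl, show S17.bv ω 3 = ω from rfl,
              show S17.bv ω 4 = 1 from rfl]
          by_cases hj : j.val = 0
          · rw [hj]
            norm_num [W]
            linear_combination ω * h2
          · rw [hWt j hj 0 (by norm_num), hWt j hj 1 (by norm_num), hWt j hj 2 (by norm_num),
                hWt j hj 3 (by norm_num), hWt j hj 4 (by norm_num)]
            ring
      · intro hzero
        have h0 : W 0 = 0 := congrFun hzero ⟨0, by omega⟩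
        simp only [W, if_pos rfl] at h0
        exact hω0 h0
      · have hinj : Function.Injective (fun m : Fin 4 => (⟨m.val, by omega⟩ : Fin (5*s+5))) := by
          intro a b h
          have h' : (⟨a.val, by omega⟩ : Fin (5*s+5)).val = (⟨b.val, by omega⟩ : Fin (5*s+5)).val :=
            congrArg Fin.val h
          exact Fin.ext h'
        have hset : {i : Fin (5*s+5) | (fun i => W i.val) i ≠ 0} =
            Set.range (fun m : Fin 4 => (⟨m.val, by omega⟩ : Fin (5*s+5))) := by
          ext i
          simp only [Set.mem_setOf_eq, Set.mem_range]
          constructor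
          · intro h
            by_cases h4 : i.val < 4
            · exact ⟨⟨i.val, h4⟩, Fin.ext rfl⟩
            · exfalso
              apply h
              simp only [W]
              rw [if_neg (by omega), if_neg (by omega), if_neg (by omega), if_neg (by omega)]
          · rintro ⟨m, rfl⟩
            fin_cases m <;> simp [W, hω0]
        show wt (fun i : Fin (5*s+5) => W i.val) = 4
        rw [wt, hset, ← Nat.card_coe_set_eq, Nat.card_range_of_injective hinj,
          Nat.card_eq_fintype_card, Fintype.card_fin]
    · -- lower bound
      intro x hxC hx0
      by_contra hcon
      push_neg at hcon
      rw [S17.mem_ker_iff] at hxC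
      obtain ⟨hloc, hA, hB⟩ := hxC
      set F := Finset.univ.filter (fun i : Fin (5*s+5) => x i ≠ 0) with hFdef
      have hwtF : wt x = F.card := by
        rw [wt, ← Set.ncard_coe_finset]
        congr 1
        ext i
        simp [hFdef]
      have hFle : F.card ≤ 3 := by omega
      have hmemF : ∀ i : Fin (5*s+5), i ∈ F ↔ x i ≠ 0 := by
        intro i; simp [hFdef]
      by_cases hsplit : ∀ i1 ∈ F, ∀ i2 ∈ F, i1.val / 5 = i2.val / 5
      · -- all support in one block
        obtain ⟨i0, hi0⟩ := Function.ne_iff.mp hx0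
        have hi0' : x i0 ≠ 0 := by simpa using hi0
        have hi0F : i0 ∈ F := (hmemF i0).mpr hi0'
        have hi0b := i0.isLt
        set j : Fin (s+1) := ⟨i0.val / 5, by omega⟩ with hjdef
        have hjv : j.val = i0.val / 5 := rfl
        set c : Fin 5 → GF4 := fun q => x (S17.e s j q) with hcdef
        have hoff : ∀ (j' : Fin (s+1)), j' ≠ j → ∀ q, x (S17.e s j' q) = 0 := by
          intro j' hj' q
          by_contra hne
          have hmem : S17.e s j' q ∈ F := (hmemF _).mpr hne
          have := hsplit _ hmem i0 hi0F
          rw [S17.e_div] at this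
          exact hj' (Fin.ext (by omega))
        have E1 : c 0 + c 1 + c 2 + c 3 + c 4 = 0 := by
          have := hloc j
          rw [S17.local_sum, Fin.sum_univ_five] at this
          exact this
        have E2 : c 1 + c 3 + ω * c 4 = 0 := by
          rw [S17.coeff_sum] at hA
          rw [Finset.sum_eq_single j] at hA
          · rw [Fin.sum_univ_five] at hA
            rw [show S17.av ω 0 = 0 from rfl, show S17.av ω 1 = 1 from rfl,
                show S17.av ω 2 = 0 from rfl, show S17.av ω 3 = 1 from rfl,
                show S17.av ω 4 = ω from rfl] at hA
            linear_combination hA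
          · intro j' _ hj'
            exact Finset.sum_eq_zero fun q _ => by rw [hoff j' hj' q, mul_zero]
          · intro h; exact absurd (Finset.mem_univ j) h
        have E3 : c 2 + ω * c 3 + c 4 = 0 := by
          rw [S17.coeff_sum] at hB
          rw [Finset.sum_eq_single j] at hB
          · rw [Fin.sum_univ_five] at hB
            rw [show S17.bv ω 0 = 0 from rfl, show S17.bv ω 1 = 0 from rfl,
                show S17.bv ω 2 = 1 from rfl, show S17.bv ω 3 = ω from rfl,
                show S17.bv ω 4 = 1 from rfl] at hB
            linear_combination hB
          · intro j' _ hj'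
            exact Finset.sum_eq_zero fun q _ => by rw [hoff j' hj' q, mul_zero]
          · intro h; exact absurd (Finset.mem_univ j) h
        have hGle : (Finset.univ.filter (fun q : Fin 5 => ¬ c q = 0)).card ≤ 3 := by
          refine le_trans (Finset.card_le_card_of_injOn (S17.e s j) ?_ ?_) hFle
          · intro q hq
            simp only [Finset.mem_coe, Finset.mem_filter, Finset.mem_univ, true_and] at hq
            exact (hmemF _).mpr hq
          · exact fun a _ b _ h => S17.e_inj s j h
        have h5 : (Finset.univ.filter (fun q : Fin 5 => c q = 0)).card +
            (Finset.univ.filter (fun q : Fin 5 => ¬ c q = 0)).card = 5 := by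
          rw [Finset.card_filter_add_card_filter_not]
          simp
        have hzc : 1 < (Finset.univ.filter (fun q : Fin 5 => c q = 0)).card := by omega
        obtain ⟨z1, hz1, z2, hz2, hne⟩ := Finset.one_lt_card.mp hzc
        simp only [Finset.mem_filter, Finset.mem_univ, true_and] at hz1 hz2
        have hkey := key ω hom h2 (c 0) (c 1) (c 2) (c 3) (c 4) E1 E2 E3
          (S17.pair_disj c z1 z2 hne hz1 hz2)
        have hcall : ∀ q, c q = 0 := S17.all_zero c hkey
        apply hi0'
        have hi0e : S17.e s j ⟨i0.val % 5, by omega⟩ = i0 :=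
          Fin.ext (by simp only [S17.e_val, Fin.val_mk]; omega)
        rw [← hi0e]
        exact hcall _
      · -- support meets two blocks
        push_neg at hsplit
        obtain ⟨i1, hi1, i2, hi2, hne12⟩ := hsplit
        have hcontra : ∀ it, it ∈ F →
            (F.filter (fun i => i.val/5 = it.val/5)).card = 1 → False := by
          intro it hit hcard1
          have hitb := it.isLt
          obtain ⟨i0, hi0eq⟩ := Finset.card_eq_one.mp hcard1
          have hi0mem : i0 ∈ F.filter (fun i => i.val/5 = it.val/5) := by
            rw [hi0eq]; exact Finset.mem_singleton_self i0
          have hi0F : i0 ∈ F := (Finset.mem_filter.mp hi0mem).1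
          have hi0blk : i0.val/5 = it.val/5 := (Finset.mem_filter.mp hi0mem).2
          set j : Fin (s+1) := ⟨it.val/5, by omega⟩ with hjdef
          have hjv : j.val = it.val/5 := rfl
          have hsum0 : ∑ q, x (S17.e s j q) = 0 := by
            rw [← S17.local_sum]; exact hloc j
          have hsingle : ∑ q, x (S17.e s j q) = x i0 := by
            rw [Finset.sum_eq_single (⟨i0.val % 5, by omega⟩ : Fin 5)]
            · congr 1
              exact Fin.ext (by simp only [S17.e_val, Fin.val_mk]; omega)
            · intro q _ hq
              by_contra hnev
              have hmem : S17.e s j q ∈ F.filter (fun i => i.val/5 = it.val/5) := by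
                rw [Finset.mem_filter]
                exact ⟨(hmemF _).mpr hnev, by rw [S17.e_div]⟩
              rw [hi0eq, Finset.mem_singleton] at hmem
              apply hq
              have := congrArg Fin.val hmem
              rw [S17.e_val] at this
              exact Fin.ext (by simp only [Fin.val_mk]; omega)
            · intro h; exact absurd (Finset.mem_univ _) h
          exact (hmemF i0).mp hi0F (hsingle ▸ hsum0)
        set F1 := F.filter (fun i => i.val/5 = i1.val/5) with hF1
        set F2 := F.filter (fun i => i.val/5 = i2.val/5) with hF2
        have h1le : 1 ≤ F1.card :=
          Finset.card_pos.mpr ⟨i1, Finset.mem_filter.mpr ⟨hi1, rfl⟩⟩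
        have h2le : 1 ≤ F2.card :=
          Finset.card_pos.mpr ⟨i2, Finset.mem_filter.mpr ⟨hi2, rfl⟩⟩
        have hdisj : Disjoint F1 F2 := by
          rw [Finset.disjoint_left]
          intro a ha1 ha2
          have h1 := (Finset.mem_filter.mp ha1).2
          have h2' := (Finset.mem_filter.mp ha2).2
          exact hne12 (h1 ▸ h2' ▸ rfl)
        have hsumle : F1.card + F2.card ≤ 3 := by
          rw [← Finset.card_union_of_disjoint hdisj]
          exact le_trans (Finset.card_le_card (Finset.union_subset
            (Finset.filter_subset _ _) (Finset.filter_subset _ _))) hFle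
        rcases (by omega : F1.card = 1 ∨ F2.card = 1) with h | h
        · exact hcontra i1 hi1 h
        · exact hcontra i2 hi2 h
  · -- locality
    intro i
    have hib := i.isLt
    set j : Fin (s+1) := ⟨i.val / 5, by omega⟩ with hjdef
    refine ⟨fun i' => if i'.val / 5 = j.val then (1:GF4) else 0, ?_, ?_, ?_⟩
    · intro x hx
      rw [S17.mem_ker_iff] at hx
      calc ∑ i', x i' * (if i'.val / 5 = j.val then (1:GF4) else 0)
          = ∑ i', (if i'.val / 5 = j.val then (1:GF4) else 0) * x i' :=
            Finset.sum_congr rfl (fun i' _ => mul_comm _ _)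
        _ = 0 := hx.1 j
    · show (if i.val / 5 = j.val then (1:GF4) else 0) ≠ 0
      rw [if_pos rfl]
      exact one_ne_zero
    · have hset : {i' : Fin (5*s+5) | (fun i' => if i'.val / 5 = j.val then (1:GF4) else 0) i' ≠ 0}
          = Set.range (S17.e s j) := by
        ext i'
        simp only [Set.mem_setOf_eq, Set.mem_range]
        constructor
        · intro h
          have hdiv : i'.val / 5 = j.val := by
            by_contra hc
            rw [if_neg hc] at h
            exact h rfl
          have hdiv' : i'.val / 5 = i.val / 5 := hdiv
          exact ⟨⟨i'.val % 5, by omega⟩, Fin.ext (by simp only [S17.e_val, Fin.val_mk]; omega)⟩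
        · rintro ⟨q, rfl⟩
          rw [S17.e_div, if_pos rfl]
          exact one_ne_zero
      show wt (fun i' : Fin (5*s+5) => if i'.val / 5 = j.val then (1:GF4) else 0) ≤ 4 + 1
      rw [wt, hset, ← Nat.card_coe_set_eq, Nat.card_range_of_injective (S17.e_inj s j),
        Nat.card_eq_fintype_card, Fintype.card_fin]
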